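/- arXiv:2012.04951 — 5 statements merged into one kernel-verified Lean document; each statement's English description precedes it below -/
import Mathlib

section
/- Let V be an r×r real symmetric positive definite matrix and let ‖V‖ denote its operator norm. Then for every vector v ∈ ℝ^r, ‖Vv‖/(1 + vᵀVv) ≤ √‖V‖/2. -/
open scoped RealInnerProductSpace

/-- Cauchy–Schwarz for the nonnegative symmetric bilinear form `⟪x, T y⟫`. -/
lemma cs_aux {E : Type*} [NormedAddCommGroup E] [InnerProductSpace ℝ E]
    (T : E →L[ℝ] E) (hsym : ∀ x y : E, ⟪T x, y⟫ = ⟪x, T y⟫)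
    (hpos : ∀ x : E, 0 ≤ ⟪x, T x⟫) (x y : E) :
    ⟪x, T y⟫ ^ 2 ≤ ⟪x, T x⟫ * ⟪y, T y⟫ := by
  have hquad : ∀ t : ℝ, 0 ≤ ⟪y, T y⟫ * (t * t) + (2 * ⟪x, T y⟫) * t + ⟪x, T x⟫ := by
    intro t
    have h := hpos (x + t • y)
    have hxy : ⟪y, T x⟫ = ⟪x, T y⟫ := by rw [← hsym x y, real_inner_comm]
    simp only [map_add, map_smul, inner_add_left, inner_add_right, inner_smul_left,
      inner_smul_right, ContinuousLinearMap.map_smul, RCLike.star_def, starRingEnd_apply,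
      star_trivial] at h
    rw [hxy] at h
    nlinarith [h]
  have hd := discrim_le_zero hquad
  rw [discrim] at hd
  nlinarith [hd]

/-- Let `V` be an `r × r` real symmetric positive definite matrix and
`‖·‖` the operator norm (via the action on Euclidean space).  Then for every vector
`v ∈ ℝ^r`, `‖V v‖ / (1 + vᵀ V v) ≤ √‖V‖ / 2`. -/
theorem phi_bound {r : ℕ} (V : Matrix (Fin r) (Fin r) ℝ) (hV : V.PosDef)
    (v : EuclideanSpace ℝ (Fin r)) :
    ‖(Matrix.toEuclideanCLM (𝕜 := ℝ) V) v‖ /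
        (1 + ⟪v, (Matrix.toEuclideanCLM (𝕜 := ℝ) V) v⟫) ≤
      Real.sqrt ‖Matrix.toEuclideanCLM (𝕜 := ℝ) V‖ / 2 := by
  set T := Matrix.toEuclideanCLM (𝕜 := ℝ) V with hTdef
  -- self-adjointness
  have hVsa : IsSelfAdjoint V := hV.isHermitian
  have hTsa : IsSelfAdjoint T := hVsa.map (Matrix.toEuclideanCLM (𝕜 := ℝ))
  have hsym : ∀ x y : EuclideanSpace ℝ (Fin r), ⟪T x, y⟫ = ⟪x, T y⟫ := by
    intro x y
    exact (ContinuousLinearMap.isSelfAdjoint_iff_isSymmetric.mp hTsa) x y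
  -- positivity
  have hpos : ∀ x : EuclideanSpace ℝ (Fin r), 0 ≤ ⟪x, T x⟫ := by
    intro x
    have h := hV.posSemidef.dotProduct_mulVec_nonneg (WithLp.equiv _ _ x)
    simpa [PiLp.inner_apply, dotProduct, Matrix.mulVec, T,
      Matrix.ofLp_toEuclideanCLM, Matrix.toLin'_apply, mul_comm] using h
  -- key: ‖T v‖ ^ 2 ≤ ‖T‖ * ⟪v, T v⟫
  have hinner : ⟪v, T (T v)⟫ = ‖T v‖ ^ 2 := by
    rw [← hsym, real_inner_self_eq_norm_sq]
  have hcs := cs_aux T hsym hpos v (T v)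
  have hb : ⟪T v, T (T v)⟫ ≤ ‖T v‖ * (‖T‖ * ‖T v‖) := by
    calc ⟪T v, T (T v)⟫ ≤ ‖T v‖ * ‖T (T v)‖ := real_inner_le_norm _ _
      _ ≤ ‖T v‖ * (‖T‖ * ‖T v‖) := by
          gcongr
          exact T.le_opNorm _
  have hkey : ‖T v‖ ^ 2 ≤ ‖T‖ * ⟪v, T v⟫ := by
    rcases eq_or_lt_of_le (norm_nonneg (T v)) with h0 | h0
    · have := mul_nonneg (norm_nonneg T) (hpos v)
      nlinarith
    · rw [hinner] at hcs
      have h5 : ‖T v‖ ^ 2 * ‖T v‖ ^ 2 ≤ (‖T‖ * ⟪v, T v⟫) * ‖T v‖ ^ 2 := by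
        nlinarith [mul_le_mul_of_nonneg_left hb (hpos v)]
      exact le_of_mul_le_mul_right h5 (by positivity)
  -- finish
  set a := ⟪v, T v⟫ with ha
  have haa : 0 ≤ a := hpos v
  have hden : (0:ℝ) < 1 + a := by linarith
  rw [div_le_div_iff₀ hden (by norm_num)]
  have h1 : ‖T v‖ ≤ Real.sqrt (‖T‖ * a) := by
    rw [← Real.sqrt_sq (norm_nonneg (T v))]
    exact Real.sqrt_le_sqrt hkey
  have h2 : Real.sqrt (‖T‖ * a) = Real.sqrt ‖T‖ * Real.sqrt a :=
    Real.sqrt_mul (norm_nonneg _) _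
  have h3 : Real.sqrt a * 2 ≤ 1 + a := by
    nlinarith [Real.sq_sqrt haa, Real.sqrt_nonneg a, sq_nonneg (Real.sqrt a - 1)]
  have h4 : 0 ≤ Real.sqrt ‖T‖ := Real.sqrt_nonneg _
  calc ‖T v‖ * 2 ≤ Real.sqrt ‖T‖ * Real.sqrt a * 2 := by
        rw [← h2]; linarith [h1]
    _ ≤ Real.sqrt ‖T‖ * (1 + a) := by nlinarith
end

section
/- Let V be an r×r real symmetric positive definite matrix, ‖V‖ its operator norm, and μ(V) = ‖V‖·‖V⁻¹‖ its condition number. Then the function φ(v) = ‖Vv‖/(1 + vᵀVv) is Lipschitz continuous on ℝ^r with Lipschitz constant L_φ(V) = ‖V‖(1 + μ(V)/2); that is, for all v, ṽ ∈ ℝ^r, |φ(v) − φ(ṽ)| ≤ ‖V‖(1 + μ(V)/2)·‖v − ṽ‖. -/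
set_option maxHeartbeats 1000000

open scoped RealInnerProductSpace

private lemma key_ineq' (a b p q d N K : ℝ) (ha : 0 ≤ a) (hb : 0 ≤ b)
    (hK : 0 < K) (hd : 0 ≤ d) (hN : 0 ≤ N)
    (hpa : a ^ 2 / K ≤ p) (hqb : b ^ 2 / K ≤ q)
    (hab : |a - b| ≤ N * d) (hpq : |p - q| ≤ (a + b) * d)
    (hba : b ≤ a) :
    |a / (1 + p) - b / (1 + q)| ≤ (N + K / 2) * d := by
  have hp0 : 0 ≤ p := le_trans (by positivity) hpa
  have hq0 : 0 ≤ q := le_trans (by positivity) hqb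
  have hp : (0:ℝ) < 1 + p := by linarith
  have hq : (0:ℝ) < 1 + q := by linarith
  have hEq : a / (1 + p) - b / (1 + q)
      = ((a - b) * (1 + q) + b * (q - p)) / ((1 + p) * (1 + q)) := by
    field_simp; ring
  rw [hEq, abs_div, abs_of_pos (by positivity : (0:ℝ) < (1 + p) * (1 + q)),
    div_le_iff₀ (by positivity)]
  have h1 : |(a - b) * (1 + q) + b * (q - p)| ≤ N * d * (1 + q) + b * ((a + b) * d) := by
    calc |(a - b) * (1 + q) + b * (q - p)|
        ≤ |(a - b) * (1 + q)| + |b * (q - p)| := abs_add_le _ _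
      _ = |a - b| * (1 + q) + b * |p - q| := by
          rw [abs_mul, abs_mul, abs_of_pos hq, abs_of_nonneg hb, abs_sub_comm p q]
      _ ≤ N * d * (1 + q) + b * ((a + b) * d) := by gcongr
  refine h1.trans ?_
  have h2 : b * (a + b) ≤ (K / 2) * ((1 + a ^ 2 / K) * (1 + b ^ 2 / K)) := by
    have e : (K / 2) * ((1 + a ^ 2 / K) * (1 + b ^ 2 / K)) = (K + a^2) * (K + b^2) / (2 * K) := by
      field_simp
    rw [e, le_div_iff₀ (by linarith)]
    nlinarith [sq_nonneg (K - a*b), sq_nonneg (a - b), mul_nonneg ha hb,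
      mul_le_mul_of_nonneg_left (mul_self_le_mul_self hb hba) hK.le]
  have h3 : (K / 2) * ((1 + a ^ 2 / K) * (1 + b ^ 2 / K)) ≤ (K / 2) * ((1 + p) * (1 + q)) := by
    have h31 : (0:ℝ) < 1 + a ^ 2 / K := by positivity
    have h32 : (0:ℝ) < 1 + b ^ 2 / K := by positivity
    gcongr <;> linarith
  have h4 : b * (a + b) ≤ (K / 2) * ((1 + p) * (1 + q)) := le_trans h2 h3
  have hNd : 0 ≤ N * d := le_trans (abs_nonneg _) hab
  nlinarith [mul_le_mul_of_nonneg_right h4 hd, mul_nonneg (mul_nonneg hN hd) hq0,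
    mul_nonneg hNd (mul_nonneg hp0 hq0), mul_nonneg hNd hp0, mul_nonneg hNd hq0]

private lemma key_ineq (a b p q d N K : ℝ) (ha : 0 ≤ a) (hb : 0 ≤ b)
    (hK : 0 < K) (hd : 0 ≤ d) (hN : 0 ≤ N)
    (hpa : a ^ 2 / K ≤ p) (hqb : b ^ 2 / K ≤ q)
    (hab : |a - b| ≤ N * d) (hpq : |p - q| ≤ (a + b) * d) :
    |a / (1 + p) - b / (1 + q)| ≤ (N + K / 2) * d := by
  rcases le_total b a with h | h
  · exact key_ineq' a b p q d N K ha hb hK hd hN hpa hqb hab hpq h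
  · rw [abs_sub_comm]
    refine key_ineq' b a q p d N K hb ha hK hd hN hqb hpa ?_ ?_ h
    · rwa [abs_sub_comm]
    · rw [abs_sub_comm]; linarith [hpq]

/-- Let `V` be an `r × r` real symmetric positive definite matrix, `‖V‖`
its operator norm and `μ(V) = ‖V‖ ⬝ ‖V⁻¹‖` its condition number.  Then
`φ(v) = ‖V v‖ / (1 + vᵀ V v)` is Lipschitz continuous on `ℝ^r` with Lipschitz constant
`L_φ(V) = ‖V‖ (1 + μ(V)/2)`. -/
theorem phi_lipschitz {r : ℕ} (V : Matrix (Fin r) (Fin r) ℝ) (hV : V.PosDef)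
    (v w : EuclideanSpace ℝ (Fin r)) :
    |‖(Matrix.toEuclideanCLM (𝕜 := ℝ) V) v‖ /
        (1 + ⟪v, (Matrix.toEuclideanCLM (𝕜 := ℝ) V) v⟫) -
      ‖(Matrix.toEuclideanCLM (𝕜 := ℝ) V) w‖ /
        (1 + ⟪w, (Matrix.toEuclideanCLM (𝕜 := ℝ) V) w⟫)| ≤
      ‖Matrix.toEuclideanCLM (𝕜 := ℝ) V‖ *
          (1 + (‖Matrix.toEuclideanCLM (𝕜 := ℝ) V‖ *
            ‖Matrix.toEuclideanCLM (𝕜 := ℝ) V⁻¹‖) / 2) * ‖v - w‖ := by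
  set T := Matrix.toEuclideanCLM (𝕜 := ℝ) V with hT
  set S := Matrix.toEuclideanCLM (𝕜 := ℝ) V⁻¹ with hS
  have hdet : IsUnit V.det := isUnit_iff_ne_zero.mpr (ne_of_gt hV.det_pos)
  have hinv : ∀ u : EuclideanSpace ℝ (Fin r), S (T u) = u := by
    intro u
    have h1 : V⁻¹ * V = 1 := Matrix.nonsing_inv_mul V hdet
    have h2 : S * T = 1 := by rw [hS, hT, ← map_mul, h1, map_one]
    calc S (T u) = (S * T) u := rfl
      _ = u := by rw [h2]; rfl
  have hinv2 : ∀ u : EuclideanSpace ℝ (Fin r), T (S u) = u := by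
    intro u
    have h1 : V * V⁻¹ = 1 := Matrix.mul_nonsing_inv V hdet
    have h2 : T * S = 1 := by rw [hS, hT, ← map_mul, h1, map_one]
    calc T (S u) = (T * S) u := rfl
      _ = u := by rw [h2]; rfl
  have hpos : ∀ (A : Matrix (Fin r) (Fin r) ℝ), A.PosSemidef →
      ∀ x : EuclideanSpace ℝ (Fin r), 0 ≤ ⟪x, (Matrix.toEuclideanCLM (𝕜 := ℝ) A) x⟫ := by
    intro A hA x
    rw [EuclideanSpace.inner_eq_star_dotProduct, Matrix.ofLp_toEuclideanCLM,
      dotProduct_comm]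
    exact hA.dotProduct_mulVec_nonneg _
  have hTpos : ∀ x, 0 ≤ ⟪x, T x⟫ := hpos V hV.posSemidef
  have hTsym : ∀ x y : EuclideanSpace ℝ (Fin r), ⟪T x, y⟫ = ⟪x, T y⟫ := by
    have hsym := Matrix.isHermitian_iff_isSymmetric.mp hV.isHermitian
    intro x y
    have h := hsym x y
    simpa [hT, ← Matrix.coe_toEuclideanCLM_eq_toEuclideanLin] using h
  by_cases hvw : v = w
  · subst hvw
    simp only [sub_self, norm_zero, abs_zero, mul_zero, le_refl]
  have hu : v - w ≠ 0 := sub_ne_zero.mpr hvw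
  have hd0 : (0:ℝ) < ‖v - w‖ := by rw [norm_pos_iff]; exact hu
  have hN0 : (0:ℝ) ≤ ‖T‖ := norm_nonneg _
  have hM0 : (0:ℝ) ≤ ‖S‖ := norm_nonneg _
  have hTu : T (v - w) ≠ 0 := by
    intro h
    have h2 := hinv (v - w)
    rw [h, map_zero] at h2
    exact hu h2.symm
  have hNpos : 0 < ‖T‖ := by
    rcases lt_or_eq_of_le hN0 with h | h
    · exact h
    · exfalso
      have h2 : ‖T (v - w)‖ ≤ ‖T‖ * ‖v - w‖ := T.le_opNorm _
      rw [← h, zero_mul] at h2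
      exact hTu (norm_le_zero_iff.mp h2)
  have hMpos : 0 < ‖S‖ := by
    rcases lt_or_eq_of_le hM0 with h | h
    · exact h
    · exfalso
      have h2 : ‖S (T (v - w))‖ ≤ ‖S‖ * ‖T (v - w)‖ := S.le_opNorm _
      rw [← h, zero_mul, hinv] at h2
      exact hu (norm_le_zero_iff.mp h2)
  -- generalized Cauchy-Schwarz
  have hCS : ∀ x y : EuclideanSpace ℝ (Fin r), ⟪x, T y⟫ ^ 2 ≤ ⟪x, T x⟫ * ⟪y, T y⟫ := by
    intro x y
    have expand : ∀ t : ℝ, ⟪x - t • y, T (x - t • y)⟫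
        = ⟪y, T y⟫ * t ^ 2 + (-2 * ⟪x, T y⟫) * t + ⟪x, T x⟫ := by
      intro t
      have hyx : ⟪y, T x⟫ = ⟪x, T y⟫ := by rw [← hTsym x y, real_inner_comm]
      rw [map_sub, map_smul, inner_sub_left, inner_sub_right, inner_sub_right,
        real_inner_smul_left, real_inner_smul_left, real_inner_smul_right,
        real_inner_smul_right, hyx]
      ring
    have hdisc : discrim ⟪y, T y⟫ (-2 * ⟪x, T y⟫) ⟪x, T x⟫ ≤ 0 := by
      apply discrim_le_zero
      intro t
      have h0 := hTpos (x - t • y)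
      linarith [expand t]
    rw [discrim] at hdisc
    nlinarith [hdisc]
  -- lower bound on quadratic form: ⟪u, T u⟫ ≥ ‖u‖² / ‖S‖
  have hlow : ∀ u : EuclideanSpace ℝ (Fin r), ‖u‖ ^ 2 / ‖S‖ ≤ ⟪u, T u⟫ := by
    intro u
    by_cases hu0 : u = 0
    · rw [hu0]
      have hz : ⟪(0 : EuclideanSpace ℝ (Fin r)), T 0⟫ = 0 := by
        rw [map_zero, inner_zero_right]
      rw [hz, norm_zero, zero_pow two_ne_zero, zero_div]
    have hnu : (0:ℝ) < ‖u‖ := by rw [norm_pos_iff]; exact hu0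
    have h1 : (⟪u, u⟫ : ℝ) ^ 2 ≤ ⟪u, T u⟫ * ⟪S u, u⟫ := by
      have h := hCS u (S u)
      rwa [hinv2 u] at h
    have h2 : (⟪S u, u⟫ : ℝ) ≤ ‖S‖ * ‖u‖ ^ 2 := by
      calc (⟪S u, u⟫ : ℝ) ≤ ‖S u‖ * ‖u‖ := real_inner_le_norm _ _
        _ ≤ ‖S‖ * ‖u‖ * ‖u‖ := by
            have := S.le_opNorm u
            nlinarith
        _ = ‖S‖ * ‖u‖ ^ 2 := by ring
    have h3 : (⟪u, u⟫ : ℝ) = ‖u‖ ^ 2 := real_inner_self_eq_norm_sq u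
    rw [h3] at h1
    have hTu0 : 0 ≤ ⟪u, T u⟫ := hTpos u
    rw [div_le_iff₀ hMpos]
    nlinarith [h1, mul_le_mul_of_nonneg_left h2 hTu0, hnu, mul_pos hnu hnu]
  -- assemble
  set a := ‖T v‖ with ha'
  set b := ‖T w‖ with hb'
  set p := (⟪v, T v⟫ : ℝ) with hp'
  set q := (⟪w, T w⟫ : ℝ) with hq'
  set d := ‖v - w‖ with hd'
  set N := ‖T‖ with hN'
  set M := ‖S‖ with hM'
  have hK : (0:ℝ) < N ^ 2 * M := by positivity
  have hpa : a ^ 2 / (N ^ 2 * M) ≤ p := by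
    have h1 : ‖v‖ ^ 2 / M ≤ p := hlow v
    have h2 : a ≤ N * ‖v‖ := T.le_opNorm v
    have h3 : a ^ 2 ≤ N ^ 2 * ‖v‖ ^ 2 := by nlinarith [norm_nonneg (T v), norm_nonneg v]
    rw [div_le_iff₀ hK]
    calc a ^ 2 ≤ N ^ 2 * ‖v‖ ^ 2 := h3
      _ ≤ p * (N ^ 2 * M) := by
          rw [div_le_iff₀ hMpos] at h1
          nlinarith [sq_nonneg N]
  have hqb : b ^ 2 / (N ^ 2 * M) ≤ q := by
    have h1 : ‖w‖ ^ 2 / M ≤ q := hlow w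
    have h2 : b ≤ N * ‖w‖ := T.le_opNorm w
    have h3 : b ^ 2 ≤ N ^ 2 * ‖w‖ ^ 2 := by nlinarith [norm_nonneg (T w), norm_nonneg w]
    rw [div_le_iff₀ hK]
    calc b ^ 2 ≤ N ^ 2 * ‖w‖ ^ 2 := h3
      _ ≤ q * (N ^ 2 * M) := by
          rw [div_le_iff₀ hMpos] at h1
          nlinarith [sq_nonneg N]
  have hab : |a - b| ≤ N * d := by
    calc |a - b| ≤ ‖T v - T w‖ := abs_norm_sub_norm_le _ _
      _ = ‖T (v - w)‖ := by rw [map_sub]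
      _ ≤ N * d := T.le_opNorm _
  have hpq : |p - q| ≤ (a + b) * d := by
    have hsplit : p - q = ⟪v - w, T v⟫ + ⟪T w, v - w⟫ := by
      rw [inner_sub_left, inner_sub_right, hTsym w v, hTsym w w]
      ring
    rw [hsplit]
    calc |(⟪v - w, T v⟫ : ℝ) + ⟪T w, v - w⟫|
        ≤ |(⟪v - w, T v⟫ : ℝ)| + |(⟪T w, v - w⟫ : ℝ)| := abs_add_le _ _
      _ ≤ ‖v - w‖ * ‖T v‖ + ‖T w‖ * ‖v - w‖ :=
          add_le_add (abs_real_inner_le_norm _ _) (abs_real_inner_le_norm _ _)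
      _ = (a + b) * d := by ring
  have key := key_ineq a b p q d N (N ^ 2 * M) (norm_nonneg _) (norm_nonneg _)
    hK (le_of_lt hd0) hN0 hpa hqb hab hpq
  calc |a / (1 + p) - b / (1 + q)| ≤ (N + N ^ 2 * M / 2) * d := key
    _ = N * (1 + N * M / 2) * d := by ring
end

section
/- Let V be an r×r real symmetric positive definite matrix with condition number μ(V) = ‖V‖·‖V⁻¹‖ (operator norms). Define φ̃(w) = ‖w‖/(1 + wᵀV⁻¹w) for w ∈ ℝ^r. Then φ̃ is differentiable at every w ≠ 0 and its gradient satisfies ‖∇φ̃(w)‖ ≤ 1 + μ(V)/2. -/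
set_option maxHeartbeats 1000000


open scoped RealInnerProductSpace

/-- Let `V` be an `r × r` real symmetric positive definite matrix with
condition number `μ(V) = ‖V‖ ⬝ ‖V⁻¹‖` (operator norms).  Define
`φ̃(w) = ‖w‖ / (1 + wᵀ V⁻¹ w)`.  Then `φ̃` is differentiable at every `w ≠ 0` and its
gradient satisfies `‖∇φ̃(w)‖ ≤ 1 + μ(V)/2`. -/
theorem phi_tilde_grad_bound {r : ℕ} (V : Matrix (Fin r) (Fin r) ℝ) (hV : V.PosDef)
    (w : EuclideanSpace ℝ (Fin r)) (hw : w ≠ 0) :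
    DifferentiableAt ℝ
        (fun u : EuclideanSpace ℝ (Fin r) =>
          ‖u‖ / (1 + ⟪u, (Matrix.toEuclideanCLM (𝕜 := ℝ) V⁻¹) u⟫)) w ∧
      ‖gradient (fun u : EuclideanSpace ℝ (Fin r) =>
          ‖u‖ / (1 + ⟪u, (Matrix.toEuclideanCLM (𝕜 := ℝ) V⁻¹) u⟫)) w‖ ≤
        1 + (‖Matrix.toEuclideanCLM (𝕜 := ℝ) V‖ *
          ‖Matrix.toEuclideanCLM (𝕜 := ℝ) V⁻¹‖) / 2 := by
  classical
  set A := Matrix.toEuclideanCLM (𝕜 := ℝ) V⁻¹ with hAdef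
  set B := Matrix.toEuclideanCLM (𝕜 := ℝ) V with hBdef
  have hw0 : (0:ℝ) < ‖w‖ := norm_pos_iff.mpr hw
  have hVinv : (V⁻¹).PosDef := hV.inv
  -- positivity of the quadratic form
  have hpos : ∀ x : EuclideanSpace ℝ (Fin r), 0 ≤ ⟪x, A x⟫ := by
    intro x
    have h1 : ⟪x, A x⟫ =
        dotProduct (star ((WithLp.equiv 2 _) x)) (V⁻¹.mulVec ((WithLp.equiv 2 _) x)) := by
      simp [A, EuclideanSpace.inner_eq_star_dotProduct, dotProduct_comm]
    rw [h1]
    exact hVinv.posSemidef.dotProduct_mulVec_nonneg _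
  -- self-adjointness
  have hsa : IsSelfAdjoint A := by
    have h1 : IsSelfAdjoint (V⁻¹) := hVinv.isHermitian
    exact h1.map (Matrix.toEuclideanCLM (𝕜 := ℝ))
  have hadj : ∀ x y : EuclideanSpace ℝ (Fin r), ⟪A x, y⟫ = ⟪x, A y⟫ := by
    intro x y
    conv_lhs => rw [← hsa.adjoint_eq]
    exact ContinuousLinearMap.adjoint_inner_left A y x
  -- inverse relation
  have hdet : IsUnit V.det := isUnit_iff_ne_zero.mpr hV.det_pos.ne'
  have hmulVV : V⁻¹ * V = 1 := Matrix.nonsing_inv_mul V hdet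
  have hAB : ∀ x : EuclideanSpace ℝ (Fin r), A (B x) = x := by
    intro x
    have h1 : A * B = 1 := by
      rw [hAdef, hBdef, ← map_mul, hmulVV, map_one]
    calc A (B x) = (A * B) x := rfl
    _ = x := by rw [h1]; rfl
  -- Cauchy–Schwarz for the positive form
  have hCS : ∀ x y : EuclideanSpace ℝ (Fin r),
      ⟪x, A y⟫ ^ 2 ≤ ⟪x, A x⟫ * ⟪y, A y⟫ := by
    intro x y
    have expand : ∀ t : ℝ,
        ⟪y, A y⟫ * t ^ 2 + (2 * ⟪x, A y⟫) * t + ⟪x, A x⟫ = ⟪x + t • y, A (x + t • y)⟫ := by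
      intro t
      have h1 : ⟪y, A x⟫ = ⟪x, A y⟫ := by rw [← hadj y x, real_inner_comm]
      simp only [map_add, map_smul, inner_add_left, inner_add_right, real_inner_smul_left,
        real_inner_smul_right, smul_eq_mul]
      linear_combination (-t) * h1
    have hd := discrim_le_zero (a := ⟪y, A y⟫) (b := 2 * ⟪x, A y⟫) (c := ⟪x, A x⟫)
      (fun t => by nlinarith [hpos (x + t • y), expand t])
    rw [discrim] at hd
    nlinarith [hd]
  -- key inequality ‖w‖² ≤ ‖B‖ ⟪w, A w⟫
  have hAwpos := hpos w
  have hkey : ‖w‖ ^ 2 ≤ ‖B‖ * ⟪w, A w⟫ := by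
    have h1 : ⟪w, A (B w)⟫ = ‖w‖ ^ 2 := by
      rw [hAB]; exact real_inner_self_eq_norm_sq w
    have h2 := hCS w (B w)
    rw [h1] at h2
    have h3 : ⟪B w, A (B w)⟫ = ⟪B w, w⟫ := by rw [hAB]
    rw [h3] at h2
    have h4 : ⟪B w, w⟫ ≤ ‖B‖ * ‖w‖ ^ 2 := by
      calc ⟪B w, w⟫ ≤ ‖B w‖ * ‖w‖ := real_inner_le_norm _ _
      _ ≤ (‖B‖ * ‖w‖) * ‖w‖ := by gcongr; exact B.le_opNorm w
      _ = ‖B‖ * ‖w‖ ^ 2 := by ring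
    nlinarith [mul_le_mul_of_nonneg_left h4 hAwpos, pow_pos hw0 2, h2]
  set q : ℝ := 1 + ⟪w, A w⟫ with hqdef
  have hq1 : (1:ℝ) ≤ q := le_add_of_nonneg_right hAwpos
  have hqpos : (0:ℝ) < q := lt_of_lt_of_le one_pos hq1
  have hq0 : q ≠ 0 := hqpos.ne'
  -- derivative of the norm
  have hN : HasFDerivAt (fun u : EuclideanSpace ℝ (Fin r) => ‖u‖)
      ((‖w‖⁻¹) • innerSL ℝ w) w := by
    have h1 : HasFDerivAt (fun u : EuclideanSpace ℝ (Fin r) => ‖u‖ ^ 2)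
        ((2:ℕ) • innerSL ℝ w) w := (hasStrictFDerivAt_norm_sq w).hasFDerivAt
    have hs : ‖w‖ ^ 2 ≠ 0 := by positivity
    have h2 := (Real.hasDerivAt_sqrt hs).comp_hasFDerivAt w h1
    have hfun : (Real.sqrt ∘ fun u : EuclideanSpace ℝ (Fin r) => ‖u‖ ^ 2) =
        fun u : EuclideanSpace ℝ (Fin r) => ‖u‖ :=
      funext fun u => by simp [Real.sqrt_sq (norm_nonneg u)]
    rw [hfun] at h2
    refine h2.congr_fderiv ?_
    ext v
    rw [Real.sqrt_sq (norm_nonneg w)]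
    simp only [ContinuousLinearMap.smul_apply, smul_eq_mul, ContinuousLinearMap.coe_smul',
      Pi.smul_apply, nsmul_eq_mul, Nat.cast_ofNat]
    field_simp
  -- derivative of the denominator
  have hDq : HasFDerivAt (fun u : EuclideanSpace ℝ (Fin r) => 1 + ⟪u, A u⟫)
      ((fderivInnerCLM ℝ (w, A w)).comp
        ((ContinuousLinearMap.id ℝ (EuclideanSpace ℝ (Fin r))).prod A)) w := by
    have hin := (hasFDerivAt_id w).inner ℝ (A.hasFDerivAt (x := w))
    exact hin.const_add 1
  have hinv2 := (hasDerivAt_inv hq0).comp_hasFDerivAt w hDq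
  have hmulf := hN.mul hinv2
  -- identify the function with the quotient
  have hfeq : (fun u : EuclideanSpace ℝ (Fin r) => ‖u‖ / (1 + ⟪u, A u⟫)) =
      fun u : EuclideanSpace ℝ (Fin r) =>
        ‖u‖ * ((fun y : ℝ => y⁻¹) ∘ fun u : EuclideanSpace ℝ (Fin r) => 1 + ⟪u, A u⟫) u :=
    funext fun u => div_eq_mul_inv _ _
  rw [Pi.mul_def, ← hfeq] at hmulf
  obtain ⟨L, hL⟩ : ∃ L : EuclideanSpace ℝ (Fin r) →L[ℝ] ℝ,
      HasFDerivAt (fun u : EuclideanSpace ℝ (Fin r) => ‖u‖ / (1 + ⟪u, A u⟫)) L w ∧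
      ∀ v, L v = ‖w‖ * (-(q ^ 2)⁻¹ * (⟪w, A v⟫ + ⟪v, A w⟫)) + q⁻¹ * (‖w‖⁻¹ * ⟪w, v⟫) := by
    refine ⟨_, hmulf, fun v => ?_⟩
    simp only [ContinuousLinearMap.add_apply, ContinuousLinearMap.coe_smul', Pi.smul_apply,
      ContinuousLinearMap.comp_apply, ContinuousLinearMap.prod_apply,
      ContinuousLinearMap.coe_id', id_eq, fderivInnerCLM_apply, innerSL_apply_apply,
      smul_eq_mul, Function.comp_apply]
    rfl
  refine ⟨hL.1.differentiableAt, ?_⟩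
  -- norm of the gradient equals norm of the Fréchet derivative
  have hgrad : ‖gradient (fun u : EuclideanSpace ℝ (Fin r) => ‖u‖ / (1 + ⟪u, A u⟫)) w‖ = ‖L‖ := by
    rw [show gradient (fun u : EuclideanSpace ℝ (Fin r) => ‖u‖ / (1 + ⟪u, A u⟫)) w =
      (InnerProductSpace.toDual ℝ (EuclideanSpace ℝ (Fin r))).symm
        (fderiv ℝ (fun u : EuclideanSpace ℝ (Fin r) => ‖u‖ / (1 + ⟪u, A u⟫)) w) from rfl,
      hL.1.fderiv]
    exact LinearIsometryEquiv.norm_map _ _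
  rw [hgrad]
  -- bound the operator norm
  have hC : (0:ℝ) ≤ q⁻¹ + 2 * ‖w‖ * ‖A w‖ / q ^ 2 := by positivity
  have hLle : ‖L‖ ≤ q⁻¹ + 2 * ‖w‖ * ‖A w‖ / q ^ 2 := by
    refine ContinuousLinearMap.opNorm_le_bound _ hC fun v => ?_
    rw [hL.2 v]
    have h1 : ⟪w, A v⟫ = ⟪A w, v⟫ := by rw [← hadj w v]
    rw [h1]
    have h2 : ⟪v, A w⟫ = ⟪A w, v⟫ := real_inner_comm _ _
    rw [h2]
    have h3 : |⟪A w, v⟫| ≤ ‖A w‖ * ‖v‖ := abs_real_inner_le_norm _ _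
    have h4 : |⟪w, v⟫| ≤ ‖w‖ * ‖v‖ := abs_real_inner_le_norm _ _
    rw [Real.norm_eq_abs]
    calc |‖w‖ * (-(q ^ 2)⁻¹ * (⟪A w, v⟫ + ⟪A w, v⟫)) + q⁻¹ * (‖w‖⁻¹ * ⟪w, v⟫)|
        ≤ |‖w‖ * (-(q ^ 2)⁻¹ * (⟪A w, v⟫ + ⟪A w, v⟫))| + |q⁻¹ * (‖w‖⁻¹ * ⟪w, v⟫)| :=
          abs_add_le _ _
      _ = ‖w‖ * ((q ^ 2)⁻¹ * (2 * |⟪A w, v⟫|)) + q⁻¹ * (‖w‖⁻¹ * |⟪w, v⟫|) := by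
          rw [abs_mul, abs_mul, abs_mul, abs_mul]
          rw [abs_of_nonneg (norm_nonneg w), abs_of_nonneg (inv_nonneg.mpr hqpos.le),
            abs_of_nonneg (inv_nonneg.mpr (norm_nonneg w)), abs_neg, abs_of_nonneg
            (inv_nonneg.mpr (sq_nonneg q))]
          rw [← two_mul, abs_mul]
          simp [abs_of_nonneg]
      _ ≤ ‖w‖ * ((q ^ 2)⁻¹ * (2 * (‖A w‖ * ‖v‖))) + q⁻¹ * (‖w‖⁻¹ * (‖w‖ * ‖v‖)) := by
          gcongr
      _ = (q⁻¹ + 2 * ‖w‖ * ‖A w‖ / q ^ 2) * ‖v‖ := by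
          field_simp
          ring
  refine hLle.trans ?_
  -- final numeric bound
  have hAw : ‖A w‖ ≤ ‖A‖ * ‖w‖ := A.le_opNorm w
  have hAnn : (0:ℝ) ≤ ‖A‖ := norm_nonneg _
  have hBnn : (0:ℝ) ≤ ‖B‖ := norm_nonneg _
  have ht : (0:ℝ) < ⟪w, A w⟫ := by nlinarith [hkey, sq_nonneg ‖w‖]
  have hq2 : 4 * ⟪w, A w⟫ ≤ q ^ 2 := by nlinarith [sq_nonneg (1 - ⟪w, A w⟫)]
  have hfrac : 2 * ‖w‖ * ‖A w‖ / q ^ 2 ≤ ‖B‖ * ‖A‖ / 2 := by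
    rw [div_le_div_iff₀ (by positivity) (by norm_num)]
    nlinarith [mul_le_mul_of_nonneg_left hkey hAnn,
      mul_le_mul_of_nonneg_left hq2 (mul_nonneg hBnn hAnn),
      mul_le_mul_of_nonneg_left hAw (mul_pos hw0 (by norm_num : (0:ℝ) < 2)).le,
      norm_nonneg (A w)]
  have hqinv : q⁻¹ ≤ 1 := by
    rw [inv_le_one_iff₀]; right; exact hq1
  linarith
end

section
/- Let F : ℝ^d → ℝ^r be differentiable with ‖F′(s)‖ ≤ L_F for all s, let C be an r×r real symmetric positive definite matrix, f̄ ∈ ℝ^r, and ᾱ ≥ 0. Define Q_F(s) = −ᾱ log(1 + D_F(s)) with D_F(s) = (f̄ − F(s))ᵀC⁻¹(f̄ − F(s)). Then for every s ∈ ℝ^d, ‖∇Q_F(s)‖ ≤ 2 L_F ᾱ C_φ(C⁻¹), where C_φ(V) = √‖V‖/2 and ‖·‖ is the operator norm; equivalently ‖∇Q_F(s)‖ ≤ L_F ᾱ √‖C⁻¹‖. -/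
open scoped RealInnerProductSpace

section Aux
variable {E : Type*} [NormedAddCommGroup E] [InnerProductSpace ℝ E]

lemma cs_pos_op (A : E →L[ℝ] E) (hsym : ∀ x y : E, ⟪A x, y⟫ = ⟪x, A y⟫)
    (hpos : ∀ x : E, 0 ≤ ⟪x, A x⟫) (x y : E) :
    ⟪x, A y⟫ ^ 2 ≤ ⟪x, A x⟫ * ⟪y, A y⟫ := by
  have key : ∀ t : ℝ, 0 ≤ ⟪y, A y⟫ * (t * t) + (2 * ⟪x, A y⟫) * t + ⟪x, A x⟫ := by
    intro t
    have h0 := hpos (x + t • y)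
    have expand : ⟪x + t • y, A (x + t • y)⟫
        = ⟪y, A y⟫ * (t * t) + (2 * ⟪x, A y⟫) * t + ⟪x, A x⟫ := by
      have hyx : ⟪y, A x⟫ = ⟪x, A y⟫ := by
        rw [← hsym x y, real_inner_comm]
      simp only [map_add, A.map_smul]
      simp [inner_add_left, inner_add_right, inner_smul_left, inner_smul_right, hyx]
      ring
    rw [expand] at h0
    linarith
  have hd := discrim_le_zero key
  rw [discrim] at hd
  nlinarith [hd]

lemma norm_sq_le_of_pos_op (A : E →L[ℝ] E) (hsym : ∀ x y : E, ⟪A x, y⟫ = ⟪x, A y⟫)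
    (hpos : ∀ x : E, 0 ≤ ⟪x, A x⟫) (x : E) :
    ‖A x‖ ^ 2 ≤ ‖A‖ * ⟪x, A x⟫ := by
  rcases eq_or_ne (A x) 0 with h | h
  · simp [h]
  · have h1 : ⟪x, A (A x)⟫ = ‖A x‖ ^ 2 := by
      rw [← hsym, real_inner_self_eq_norm_sq]
    have h2 := cs_pos_op A hsym hpos x (A x)
    rw [h1] at h2
    have h3 : ⟪A x, A (A x)⟫ ≤ ‖A‖ * ‖A x‖ ^ 2 := by
      calc ⟪A x, A (A x)⟫ ≤ ‖A x‖ * ‖A (A x)‖ := real_inner_le_norm _ _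
        _ ≤ ‖A x‖ * (‖A‖ * ‖A x‖) :=
            mul_le_mul_of_nonneg_left (A.le_opNorm _) (norm_nonneg _)
        _ = ‖A‖ * ‖A x‖ ^ 2 := by ring
    have hnx : (0:ℝ) < ‖A x‖ := norm_pos_iff.mpr h
    nlinarith [hpos x, mul_le_mul_of_nonneg_left h3 (hpos x), mul_pos hnx hnx]

end Aux

/-- With `F : ℝ^d → ℝ^r` differentiable, `‖F′(s)‖ ≤ L_F` everywhere, `C`
symmetric positive definite, `f̄ ∈ ℝ^r`, `ᾱ ≥ 0`, and
`Q_F(s) = −ᾱ log(1 + D_F(s))` where `D_F(s) = (f̄ − F(s))ᵀ C⁻¹ (f̄ − F(s))`, the gradient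
is bounded: `‖∇Q_F(s)‖ ≤ 2 L_F ᾱ C_φ(C⁻¹)` with `C_φ(V) = √‖V‖ / 2`. -/
theorem QF_gradient_bound {d r : ℕ}
    (F : EuclideanSpace ℝ (Fin d) → EuclideanSpace ℝ (Fin r))
    (hF : Differentiable ℝ F) (L_F : ℝ) (hF' : ∀ s, ‖fderiv ℝ F s‖ ≤ L_F)
    (C : Matrix (Fin r) (Fin r) ℝ) (hC : C.PosDef)
    (fbar : EuclideanSpace ℝ (Fin r)) (αbar : ℝ) (hα : 0 ≤ αbar)
    (D_F Q_F : EuclideanSpace ℝ (Fin d) → ℝ)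
    (hD : D_F = fun s => ⟪fbar - F s, (Matrix.toEuclideanCLM (𝕜 := ℝ) C⁻¹) (fbar - F s)⟫)
    (hQ : Q_F = fun s => -αbar * Real.log (1 + D_F s)) :
    ∀ s, ‖gradient Q_F s‖ ≤
      2 * L_F * αbar * (Real.sqrt ‖Matrix.toEuclideanCLM (𝕜 := ℝ) C⁻¹‖ / 2) := by
  intro s
  set A := Matrix.toEuclideanCLM (𝕜 := ℝ) C⁻¹ with hA
  have hCinv : (C⁻¹).PosDef := hC.inv
  have hsymLin := Matrix.isHermitian_iff_isSymmetric.mp hCinv.isHermitian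
  have hcoe : ∀ x : EuclideanSpace ℝ (Fin r), A x = Matrix.toEuclideanLin C⁻¹ x := fun x =>
    DFunLike.congr_fun (Matrix.coe_toEuclideanCLM_eq_toEuclideanLin C⁻¹) x
  have hsym : ∀ x y : EuclideanSpace ℝ (Fin r), ⟪A x, y⟫ = ⟪x, A y⟫ := by
    intro x y; rw [hcoe, hcoe]; exact hsymLin x y
  have hpos : ∀ x : EuclideanSpace ℝ (Fin r), 0 ≤ ⟪x, A x⟫ := by
    intro x
    rw [hcoe]
    have := hCinv.posSemidef.dotProduct_mulVec_nonneg (WithLp.equiv 2 _ x)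
    simp [EuclideanSpace.inner_eq_star_dotProduct, Matrix.toEuclideanLin_apply] at this ⊢
    rw [dotProduct_comm]; exact this
  have hL : 0 ≤ L_F := le_trans (norm_nonneg _) (hF' s)
  set g : EuclideanSpace ℝ (Fin r) := fbar - F s with hg
  have hgd : HasFDerivAt (fun t => fbar - F t) (-(fderiv ℝ F s)) s := by
    have h := (hasFDerivAt_const fbar s).sub (hF s).hasFDerivAt
    rw [zero_sub] at h; exact h
  have hAgd : HasFDerivAt (fun t => A (fbar - F t)) (A.comp (-(fderiv ℝ F s))) s :=
    A.hasFDerivAt.comp s hgd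
  have hDd : HasFDerivAt D_F
      ((fderivInnerCLM ℝ (g, A g)).comp ((-(fderiv ℝ F s)).prod (A.comp (-(fderiv ℝ F s))))) s := by
    rw [hD]
    exact hgd.inner ℝ hAgd
  have hDval : D_F s = ⟪g, A g⟫ := by rw [hD]
  have hDpos : 0 ≤ D_F s := by rw [hDval]; exact hpos g
  have h1D : (0:ℝ) < 1 + D_F s := by linarith
  have hlog : HasDerivAt (fun y : ℝ => -αbar * Real.log (1 + y))
      (-αbar * (1 + D_F s)⁻¹) (D_F s) := by
    have : HasDerivAt (fun y : ℝ => 1 + y) 1 (D_F s) := by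
      simpa using (hasDerivAt_id (D_F s)).const_add 1
    simpa using ((this.log h1D.ne').const_mul (-αbar))
  set Φ : EuclideanSpace ℝ (Fin d) →L[ℝ] ℝ := (-αbar * (1 + D_F s)⁻¹) •
      ((fderivInnerCLM ℝ (g, A g)).comp
        ((-(fderiv ℝ F s)).prod (A.comp (-(fderiv ℝ F s))))) with hΦ
  have hQd : HasFDerivAt Q_F Φ s := by
    rw [hQ]
    exact hlog.comp_hasFDerivAt s hDd
  have hgrad : HasGradientAt Q_F ((InnerProductSpace.toDual ℝ _).symm Φ) s :=
    (hasFDerivAt_iff_hasGradientAt).mp hQd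
  rw [hgrad.gradient, LinearIsometryEquiv.norm_map]
  have hAg : ‖A g‖ ≤ Real.sqrt ‖A‖ * Real.sqrt (D_F s) := by
    have h := norm_sq_le_of_pos_op A hsym hpos g
    have h2 : ‖A g‖ ≤ Real.sqrt (‖A‖ * D_F s) := by
      rw [← Real.sqrt_sq (norm_nonneg (A g))]
      exact Real.sqrt_le_sqrt (by rw [hDval]; exact h)
    rwa [Real.sqrt_mul (norm_nonneg A)] at h2
  have key : 2 * Real.sqrt (D_F s) ≤ 1 + D_F s := by
    nlinarith [sq_nonneg (Real.sqrt (D_F s) - 1), Real.sq_sqrt hDpos]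
  have hfrac : (1 + D_F s)⁻¹ * (2 * Real.sqrt (D_F s)) ≤ 1 := by
    rw [← div_eq_inv_mul]
    exact div_le_one_of_le₀ key h1D.le
  refine ContinuousLinearMap.opNorm_le_bound _ (by positivity) (fun v => ?_)
  set w : EuclideanSpace ℝ (Fin r) := (-(fderiv ℝ F s)) v with hw
  have hval : Φ v = (-αbar * (1 + D_F s)⁻¹) * (⟪g, A w⟫ + ⟪w, A g⟫) := by
    simp [hΦ, fderivInnerCLM_apply, hw]
  have hsum : ⟪g, A w⟫ + ⟪w, A g⟫ = 2 * ⟪A g, w⟫ := by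
    rw [← hsym g w, real_inner_comm w (A g)]
    ring
  have hwnorm : ‖w‖ ≤ L_F * ‖v‖ := by
    calc ‖w‖ ≤ ‖-(fderiv ℝ F s)‖ * ‖v‖ := (-(fderiv ℝ F s)).le_opNorm v
      _ ≤ L_F * ‖v‖ := by
          rw [norm_neg]
          exact mul_le_mul_of_nonneg_right (hF' s) (norm_nonneg v)
  have hSabs : |⟪g, A w⟫ + ⟪w, A g⟫| ≤ 2 * (‖A g‖ * ‖w‖) := by
    rw [hsum, abs_mul, abs_two]
    exact mul_le_mul_of_nonneg_left (abs_real_inner_le_norm _ _) (by norm_num)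
  have hprod : ‖A g‖ * ‖w‖ ≤ (Real.sqrt ‖A‖ * Real.sqrt (D_F s)) * (L_F * ‖v‖) :=
    mul_le_mul hAg hwnorm (norm_nonneg _) (by positivity)
  have hPnn : 0 ≤ αbar * Real.sqrt ‖A‖ * L_F * ‖v‖ := by positivity
  calc ‖Φ v‖ = |(-αbar * (1 + D_F s)⁻¹)| * |⟪g, A w⟫ + ⟪w, A g⟫| := by
        rw [hval, Real.norm_eq_abs, abs_mul]
    _ = (αbar * (1 + D_F s)⁻¹) * |⟪g, A w⟫ + ⟪w, A g⟫| := by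
        rw [abs_mul, abs_neg, abs_of_nonneg hα, abs_of_nonneg (inv_nonneg.mpr h1D.le)]
    _ ≤ (αbar * (1 + D_F s)⁻¹) * (2 * ((Real.sqrt ‖A‖ * Real.sqrt (D_F s)) * (L_F * ‖v‖))) := by
        refine mul_le_mul_of_nonneg_left ?_ (by positivity)
        calc |⟪g, A w⟫ + ⟪w, A g⟫| ≤ 2 * (‖A g‖ * ‖w‖) := hSabs
          _ ≤ 2 * ((Real.sqrt ‖A‖ * Real.sqrt (D_F s)) * (L_F * ‖v‖)) := by linarith
    _ = (αbar * Real.sqrt ‖A‖ * L_F * ‖v‖) * ((1 + D_F s)⁻¹ * (2 * Real.sqrt (D_F s))) := by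
        ring
    _ ≤ (αbar * Real.sqrt ‖A‖ * L_F * ‖v‖) * 1 := mul_le_mul_of_nonneg_left hfrac hPnn
    _ = 2 * L_F * αbar * (Real.sqrt ‖A‖ / 2) * ‖v‖ := by ring
end

section
/- Let m₁, m₂ ∈ ℝ³ and c > 0, and define 𝒢(s) = (1/c)(‖s − m₁‖ − ‖s − m₂‖). Then 𝒢 is twice differentiable at every s with s ≠ m₁ and s ≠ m₂, with Hessian 𝒢″(s) = (1/(c‖s − m₁‖))(I − e₁e₁ᵀ) − (1/(c‖s − m₂‖))(I − e₂e₂ᵀ), where eᵢ = (s − mᵢ)/‖s − mᵢ‖; moreover, if R > 0 and min{‖s − m₁‖, ‖s − m₂‖} ≥ R, then the operator norm of the Hessian satisfies ‖𝒢″(s)‖ ≤ 3/(cR). -/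
open scoped RealInnerProductSpace

noncomputable section
local notation "E" => EuclideanSpace ℝ (Fin 3)

lemma aux_conv {F : Type*} [NormedAddCommGroup F] [NormedSpace ℝ F] {f g : E → F}
    {f' g' : E →L[ℝ] F} {x : E} (h : HasFDerivAt g g' x) (hf : f = g) (hd : f' = g') :
    HasFDerivAt f f' x := by
  subst hf; subst hd; exact h

lemma aux_norm_fderiv {x : E} (hx : x ≠ 0) :
    HasFDerivAt (fun u : E => ‖u‖) (innerSL ℝ (‖x‖⁻¹ • x)) x := by
  have h2 : HasFDerivAt (fun u : E => ‖u‖ ^ 2) (2 • innerSL ℝ x) x :=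
    (hasStrictFDerivAt_norm_sq x).hasFDerivAt
  have hs : HasDerivAt Real.sqrt (1 / (2 * Real.sqrt (‖x‖ ^ 2))) (‖x‖ ^ 2) :=
    Real.hasDerivAt_sqrt (pow_ne_zero 2 (norm_ne_zero_iff.2 hx))
  have := hs.comp_hasFDerivAt x h2
  have hx' : ‖x‖ ≠ 0 := norm_ne_zero_iff.2 hx
  refine aux_conv this ?_ ?_
  · funext u; simp [Real.sqrt_sq (norm_nonneg u)]
  · ext y
    simp [Real.sqrt_sq (norm_nonneg x), real_inner_smul_left]
    field_simp

lemma aux_dist_fderiv (m : E) {s : E} (h : s ≠ m) :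
    HasFDerivAt (fun u : E => ‖u - m‖) (innerSL ℝ (‖s - m‖⁻¹ • (s - m))) s := by
  have := (aux_norm_fderiv (sub_ne_zero.2 h)).comp s ((hasFDerivAt_id s).sub_const m)
  refine aux_conv this rfl ?_
  simp

lemma aux_e_fderiv (m : E) {s : E} (h : s ≠ m) :
    HasFDerivAt (fun u : E => ‖u - m‖⁻¹ • (u - m))
      (‖s - m‖⁻¹ • (ContinuousLinearMap.id ℝ E -
        (innerSL ℝ (‖s - m‖⁻¹ • (s - m))).smulRight (‖s - m‖⁻¹ • (s - m)))) s := by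
  set r := ‖s - m‖ with hr
  have hrne : r ≠ 0 := norm_ne_zero_iff.2 (sub_ne_zero.2 h)
  have hn := aux_dist_fderiv m h
  have hinv : HasFDerivAt (fun u : E => ‖u - m‖⁻¹)
      ((-(r ^ 2)⁻¹) • innerSL ℝ (r⁻¹ • (s - m))) s :=
    (hasDerivAt_inv hrne).comp_hasFDerivAt s hn
  have hid : HasFDerivAt (fun u : E => u - m) (ContinuousLinearMap.id ℝ E) s := by
    simpa using (hasFDerivAt_id s).sub_const m
  have := hinv.smul hid
  refine aux_conv this rfl ?_
  refine ContinuousLinearMap.ext fun y => ?_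
  simp only [ContinuousLinearMap.smul_apply, ContinuousLinearMap.sub_apply,
    ContinuousLinearMap.id_apply, ContinuousLinearMap.add_apply,
    ContinuousLinearMap.smulRight_apply, innerSL_apply_apply, real_inner_smul_left,
    neg_smul, smul_sub, smul_smul]
  match_scalars
  all_goals simp [← hr, inner_sub_left, real_inner_smul_left]
  all_goals ring

lemma aux_proj_norm {e : E} (he : ‖e‖ = 1) :
    ‖ContinuousLinearMap.id ℝ E - (innerSL ℝ e).smulRight e‖ ≤ 1 := by
  refine ContinuousLinearMap.opNorm_le_bound _ zero_le_one fun x => ?_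
  rw [one_mul]
  have h1 : ‖x - (⟪e, x⟫) • e‖ ^ 2 ≤ ‖x‖ ^ 2 := by
    rw [norm_sub_sq_real, real_inner_smul_right, norm_smul]
    simp [he, real_inner_comm e x]
    nlinarith [real_inner_comm e x, sq_abs (⟪e, x⟫)]
  have h2 : ‖(ContinuousLinearMap.id ℝ E - (innerSL ℝ e).smulRight e) x‖
      = ‖x - (⟪e, x⟫) • e‖ := by
    simp [ContinuousLinearMap.sub_apply]
  rw [h2]
  have := Real.sqrt_le_sqrt h1
  simpa [Real.sqrt_sq (norm_nonneg _)] using this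

lemma aux_gradient {f : E → ℝ} {v : E} {x : E}
    (h : HasFDerivAt f (innerSL ℝ v) x) : HasGradientAt f v x := by
  rw [hasGradientAt_iff_hasFDerivAt]
  exact h

/-- **part of Theorem 3 of the paper.** For `𝒢(s) = (1/c)(‖s−m₁‖ − ‖s−m₂‖)`
with `c > 0`, `𝒢` is twice differentiable at every `s ∉ {m₁, m₂}` with Hessian
`𝒢″(s) = (1/(c‖s−m₁‖))(I − e₁e₁ᵀ) − (1/(c‖s−m₂‖))(I − e₂e₂ᵀ)`, `eᵢ = (s−mᵢ)/‖s−mᵢ‖`,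
and `‖𝒢″(s)‖ ≤ 3/(cR)` whenever `min{‖s−m₁‖, ‖s−m₂‖} ≥ R > 0`. -/
theorem ITD_hessian {c : ℝ} (hc : 0 < c) (m₁ m₂ : EuclideanSpace ℝ (Fin 3))
    (G : EuclideanSpace ℝ (Fin 3) → ℝ)
    (hG : G = fun s => (1 / c) * (‖s - m₁‖ - ‖s - m₂‖)) :
    ∀ s, s ≠ m₁ → s ≠ m₂ →
      DifferentiableAt ℝ G s ∧
      DifferentiableAt ℝ (fun u => gradient G u) s ∧
      (fderiv ℝ (fun u => gradient G u) s =
        (1 / (c * ‖s - m₁‖)) •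
            (ContinuousLinearMap.id ℝ (EuclideanSpace ℝ (Fin 3)) -
              (innerSL ℝ (‖s - m₁‖⁻¹ • (s - m₁))).smulRight (‖s - m₁‖⁻¹ • (s - m₁))) -
          (1 / (c * ‖s - m₂‖)) •
            (ContinuousLinearMap.id ℝ (EuclideanSpace ℝ (Fin 3)) -
              (innerSL ℝ (‖s - m₂‖⁻¹ • (s - m₂))).smulRight (‖s - m₂‖⁻¹ • (s - m₂)))) ∧
      ∀ R : ℝ, 0 < R → R ≤ ‖s - m₁‖ → R ≤ ‖s - m₂‖ →
        ‖fderiv ℝ (fun u => gradient G u) s‖ ≤ 3 / (c * R) := by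
  intro s hs1 hs2
  -- the explicit gradient map
  set F : E → E := fun u => (1 / c) • (‖u - m₁‖⁻¹ • (u - m₁) - ‖u - m₂‖⁻¹ • (u - m₂)) with hF
  -- G has fderiv innerSL (F u) at every u ∉ {m₁, m₂}
  have hGd : ∀ u : E, u ≠ m₁ → u ≠ m₂ → HasFDerivAt G (innerSL ℝ (F u)) u := by
    intro u h1 h2
    have h := (((aux_dist_fderiv m₁ h1).sub (aux_dist_fderiv m₂ h2)).const_mul (1 / c))
    rw [hG]
    refine aux_conv h rfl ?_
    simp [hF, map_smul, map_sub]
  have hGrad : ∀ u : E, u ≠ m₁ → u ≠ m₂ → gradient G u = F u := by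
    intro u h1 h2
    exact (aux_gradient (hGd u h1 h2)).gradient
  -- the open neighborhood
  have hopen : IsOpen {u : E | u ≠ m₁ ∧ u ≠ m₂} :=
    (isOpen_compl_singleton.inter isOpen_compl_singleton)
  have hmem : {u : E | u ≠ m₁ ∧ u ≠ m₂} ∈ nhds s := hopen.mem_nhds ⟨hs1, hs2⟩
  have heq : (fun u => gradient G u) =ᶠ[nhds s] F :=
    Filter.eventuallyEq_of_mem hmem fun u hu => hGrad u hu.1 hu.2
  -- F has the desired fderiv
  set D := (1 / (c * ‖s - m₁‖)) •
            (ContinuousLinearMap.id ℝ E -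
              (innerSL ℝ (‖s - m₁‖⁻¹ • (s - m₁))).smulRight (‖s - m₁‖⁻¹ • (s - m₁))) -
          (1 / (c * ‖s - m₂‖)) •
            (ContinuousLinearMap.id ℝ E -
              (innerSL ℝ (‖s - m₂‖⁻¹ • (s - m₂))).smulRight (‖s - m₂‖⁻¹ • (s - m₂))) with hD
  have hFd : HasFDerivAt F D s := by
    have h := ((aux_e_fderiv m₁ hs1).sub (aux_e_fderiv m₂ hs2)).const_smul (1 / c)
    refine aux_conv h rfl ?_
    rw [hD]
    have h1 : ‖s - m₁‖ ≠ 0 := norm_ne_zero_iff.2 (sub_ne_zero.2 hs1)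
    have h2 : ‖s - m₂‖ ≠ 0 := norm_ne_zero_iff.2 (sub_ne_zero.2 hs2)
    match_scalars <;> field_simp <;> ring
  have hfderiv : fderiv ℝ (fun u => gradient G u) s = D := by
    rw [heq.fderiv_eq, hFd.fderiv]
  refine ⟨(hGd s hs1 hs2).differentiableAt, ?_, hfderiv, ?_⟩
  · exact heq.differentiableAt_iff.2 hFd.differentiableAt
  · intro R hR hR1 hR2
    rw [hfderiv, hD]
    have he1 : ‖‖s - m₁‖⁻¹ • (s - m₁)‖ = 1 := by
      rw [norm_smul, norm_inv, norm_norm, inv_mul_cancel₀ (norm_ne_zero_iff.2 (sub_ne_zero.2 hs1))]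
    have he2 : ‖‖s - m₂‖⁻¹ • (s - m₂)‖ = 1 := by
      rw [norm_smul, norm_inv, norm_norm, inv_mul_cancel₀ (norm_ne_zero_iff.2 (sub_ne_zero.2 hs2))]
    have hcR : (0:ℝ) < c * R := by positivity
    have key : ∀ v : E, ‖v‖ = 1 → ∀ r : ℝ, R ≤ r →
        ‖(1 / (c * r)) • (ContinuousLinearMap.id ℝ E - (innerSL ℝ v).smulRight v)‖
          ≤ 1 / (c * R) := by
      intro v hv r hr
      have hr0 : (0:ℝ) < r := lt_of_lt_of_le hR hr
      refine (ContinuousLinearMap.opNorm_smul_le _ _).trans ?_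
      have habs : ‖(1 / (c * r) : ℝ)‖ = 1 / (c * r) :=
        Real.norm_of_nonneg (by positivity)
      rw [habs]
      calc (1 / (c * r)) * ‖ContinuousLinearMap.id ℝ E - (innerSL ℝ v).smulRight v‖
          ≤ (1 / (c * R)) * 1 := by
            apply mul_le_mul _ (aux_proj_norm hv) (norm_nonneg _) (by positivity)
            exact one_div_le_one_div_of_le hcR (mul_le_mul_of_nonneg_left hr hc.le)
        _ = 1 / (c * R) := mul_one _
    calc ‖_ - _‖ ≤ ‖_‖ + ‖_‖ := norm_sub_le _ _
      _ ≤ 1 / (c * R) + 1 / (c * R) := add_le_add (key _ he1 _ hR1) (key _ he2 _ hR2)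
      _ ≤ 3 / (c * R) := by
          rw [← add_div, div_le_div_iff₀ hcR hcR]
          nlinarith
end
end
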